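/- Let g(Δ₀) = Δ₀ - δ∞ + δ(Δ₀ - δ∞) where δ is a symmetric strictly causal involution delay function with limit δ∞. Then g is strictly increasing and differentiable on (δ∞ - δ_min, δ∞) with g'(Δ₀) ≥ 1 + δ'(0), and g(Δ₀) → 0 as Δ₀ → δ∞ - δ_min and g(Δ₀) → δ(0) as Δ₀ → δ∞. Consequently, for every value v ∈ (0, δ(0)) there is a unique Δ₀ ∈ (δ∞ - δ_min, δ∞) with g(Δ₀) = v. -/

import Mathlib

/-- For a symmetric strictly causal involution delay function
`δ : (-δ∞, ∞) → (-∞, δ∞)` with limit `δ∞` and fixed point `m = δ_min`, the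
function `g Δ₀ = Δ₀ - δ∞ + δ (Δ₀ - δ∞)` is strictly increasing and
differentiable on `(δ∞ - m, δ∞)` with `g' ≥ 1 + δ' 0`, tends to `0` at
`δ∞ - m` and to `δ 0` at `δ∞`; hence every `v ∈ (0, δ 0)` has a unique
preimage in `(δ∞ - m, δ∞)`. -/
theorem stmt_17 (δ : ℝ → ℝ) (dInf m : ℝ)
    (hm0 : 0 < m) (hmd : m < dInf)
    (hmono : StrictMonoOn δ (Set.Ioi (-dInf)))
    (hconc : ConcaveOn ℝ (Set.Ioi (-dInf)) δ)
    (hdiff : DifferentiableOn ℝ δ (Set.Ioi (-dInf)))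
    (hmap : Set.MapsTo δ (Set.Ioi (-dInf)) (Set.Iio dInf))
    (hinv : ∀ T ∈ Set.Ioi (-dInf), -δ (-δ T) = T)
    (h0 : 0 < δ 0)
    (hlim : Filter.Tendsto δ Filter.atTop (nhds dInf))
    (hfix : δ (-m) = m)
    (g : ℝ → ℝ) (hg : ∀ x, g x = x - dInf + δ (x - dInf)) :
    StrictMonoOn g (Set.Ioo (dInf - m) dInf) ∧
    DifferentiableOn ℝ g (Set.Ioo (dInf - m) dInf) ∧
    (∀ x ∈ Set.Ioo (dInf - m) dInf, 1 + deriv δ 0 ≤ deriv g x) ∧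
    Filter.Tendsto g (nhdsWithin (dInf - m) (Set.Ioi (dInf - m))) (nhds 0) ∧
    Filter.Tendsto g (nhdsWithin dInf (Set.Iio dInf)) (nhds (δ 0)) ∧
    (∀ v ∈ Set.Ioo 0 (δ 0), ∃! x : ℝ, x ∈ Set.Ioo (dInf - m) dInf ∧ g x = v) := by
  have hgf : g = fun x => x - dInf + δ (x - dInf) := funext hg
  have hdat : ∀ u ∈ Set.Ioi (-dInf), DifferentiableAt ℝ δ u := fun u hu =>
    hdiff.differentiableAt (isOpen_Ioi.mem_nhds hu)
  have hsub : ∀ x ∈ Set.Icc (dInf - m) dInf, x - dInf ∈ Set.Ioi (-dInf) := by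
    intro x hx
    have : -m ≤ x - dInf := by linarith [hx.1]
    have : -dInf < x - dInf := by linarith
    exact this
  have hsub' : ∀ x ∈ Set.Ioo (dInf - m) dInf, x - dInf ∈ Set.Ioi (-dInf) := fun x hx =>
    hsub x (Set.mem_Icc.2 ⟨le_of_lt hx.1, le_of_lt hx.2⟩)
  -- strict mono
  have hSM : StrictMonoOn g (Set.Ioo (dInf - m) dInf) := by
    intro x hx y hy hxy
    rw [hg, hg]
    have := hmono (hsub' x hx) (hsub' y hy) (by linarith)
    linarith
  -- differentiability / derivative
  have hder0 : ∀ x : ℝ, x - dInf ∈ Set.Ioi (-dInf) →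
      HasDerivAt g (1 + deriv δ (x - dInf)) x := by
    intro x hx
    have h1 : HasDerivAt (fun x : ℝ => x - dInf) 1 x := (hasDerivAt_id x).sub_const dInf
    have h2 : HasDerivAt δ (deriv δ (x - dInf)) (x - dInf) :=
      (hdat _ hx).hasDerivAt
    have h3 : HasDerivAt (fun y : ℝ => δ (y - dInf)) (deriv δ (x - dInf) * 1) x :=
      h2.comp x h1
    rw [hgf]
    have h4 := h1.add h3
    rw [mul_one] at h4
    exact h4
  have hder : ∀ x ∈ Set.Ioo (dInf - m) dInf, HasDerivAt g (1 + deriv δ (x - dInf)) x :=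
    fun x hx => hder0 x (hsub' x hx)
  have hDiff : DifferentiableOn ℝ g (Set.Ioo (dInf - m) dInf) := fun x hx =>
    (hder x hx).differentiableAt.differentiableWithinAt
  -- derivative bound
  have hdb : ∀ x ∈ Set.Ioo (dInf - m) dInf, 1 + deriv δ 0 ≤ deriv g x := by
    intro x hx
    rw [(hder x hx).deriv]
    have h0mem : (0 : ℝ) ∈ Set.Ioi (-dInf) := by
      simp only [Set.mem_Ioi]; linarith
    have hle : deriv δ 0 ≤ deriv δ (x - dInf) :=
      hconc.antitoneOn_deriv hdat (hsub' x hx) h0mem (by linarith [hx.2])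
    linarith
  -- continuity on the closed interval
  have hcont : ContinuousOn g (Set.Icc (dInf - m) dInf) := fun x hx =>
    (hder0 x (hsub x hx)).continuousAt.continuousWithinAt
  have hga : g (dInf - m) = 0 := by
    rw [hg]; rw [show dInf - m - dInf = -m by ring, hfix]; ring
  have hgb : g dInf = δ 0 := by rw [hg]; simp
  have hablt : dInf - m < dInf := by linarith
  -- limits
  have hta : Filter.Tendsto g (nhdsWithin (dInf - m) (Set.Ioi (dInf - m))) (nhds 0) := by
    have hca : ContinuousAt g (dInf - m) :=
      (hder0 _ (hsub _ (Set.mem_Icc.2 ⟨le_refl _, le_of_lt hablt⟩))).continuousAt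
    have := hca.continuousWithinAt (s := Set.Ioi (dInf - m))
    rw [ContinuousWithinAt, hga] at this
    exact this
  have htb : Filter.Tendsto g (nhdsWithin dInf (Set.Iio dInf)) (nhds (δ 0)) := by
    have hca : ContinuousAt g dInf :=
      (hder0 _ (hsub _ (Set.mem_Icc.2 ⟨le_of_lt hablt, le_refl _⟩))).continuousAt
    have := hca.continuousWithinAt (s := Set.Iio dInf)
    rw [ContinuousWithinAt, hgb] at this
    exact this
  refine ⟨hSM, hDiff, hdb, hta, htb, ?_⟩
  intro v hv
  have hiv : Set.Ioo (g (dInf - m)) (g dInf) ⊆ g '' Set.Ioo (dInf - m) dInf :=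
    intermediate_value_Ioo (le_of_lt hablt) hcont
  have hvmem : v ∈ Set.Ioo (g (dInf - m)) (g dInf) := by rw [hga, hgb]; exact hv
  obtain ⟨x, hx, hgx⟩ := hiv hvmem
  refine ⟨x, ⟨hx, hgx⟩, ?_⟩
  rintro y ⟨hy, hgy⟩
  exact hSM.injOn hy hx (by rw [hgx, hgy])
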